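/- arXiv:2602.12130 — 2 statements merged into one kernel-verified Lean document; each statement's English description precedes it below -/
import Mathlib

section
/- Let ρ be a nonempty Cayley permutation and σ a ρ-minimal inversion sequence. Then |ρ| + mdd(ρ) ≤ |σ| ≤ |ρ| + 2·mdd(ρ); in particular |σ| ≤ 3|ρ| - 2. -/
/-- `σ` is an inversion sequence: `σ_i ∈ {0,…,i-1}` (0-indexed: `σ[i] ≤ i`). -/
def IsInvSeq (σ : List ℕ) : Prop := ∀ i < σ.length, σ.getD i 0 ≤ i

/-- `σ` is a Cayley permutation: its value set is `{0,…,max σ}` (downward closed). -/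
def IsCayley (σ : List ℕ) : Prop := ∀ v w : ℕ, w ∈ σ → v ≤ w → v ∈ σ

/-- Maximum diagonal difference `max_i (σ_i - i + 1)` (0-indexed: `max_i (σ[i] - i)`). -/
def mdd (σ : List ℕ) : ℤ :=
  ((List.range σ.length).map (fun i => (σ.getD i 0 : ℤ) - i)).foldr max (-(σ.length : ℤ))

/-- `τ` and `σ` are order-isomorphic sequences of the same length. -/
def OrdIso (τ σ : List ℕ) : Prop :=
  τ.length = σ.length ∧ ∀ i j : ℕ, i < τ.length → j < τ.length →
    (τ.getD i 0 ≤ τ.getD j 0 ↔ σ.getD i 0 ≤ σ.getD j 0)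

/-- `σ` contains the pattern `ρ` (i.e. `ρ ⪯ σ`): some subsequence of `σ` is
order-isomorphic to `ρ`. -/
def ContainsPat (σ ρ : List ℕ) : Prop := ∃ τ : List ℕ, τ.Sublist σ ∧ OrdIso ρ τ

/-- The reduction of `σ`: the `j`-th smallest distinct value is replaced by `j-1`. -/
def red (σ : List ℕ) : List ℕ :=
  σ.map (fun v => (σ.toFinset.filter (fun w => w < v)).card)

/-- Number of distinct values of `σ`. -/
def distv (σ : List ℕ) : ℕ := σ.toFinset.card

/-- Positions (0-indexed) of saturated entries of `σ`. -/
def Sat (σ : List ℕ) : Set ℕ := {i | i < σ.length ∧ (σ.getD i 0 : ℤ) - i = mdd σ}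

/-- `σ` is a ρ-minimal inversion sequence: a minimal element, under pattern
containment, of the set of inversion sequences that are Cayley permutations and
contain `ρ`. -/
def IsMinimalFor (ρ σ : List ℕ) : Prop :=
  IsInvSeq σ ∧ IsCayley σ ∧ ContainsPat σ ρ ∧
  ∀ τ : List ℕ, IsInvSeq τ → IsCayley τ → ContainsPat τ ρ → ContainsPat σ τ → τ = σ

/-- the rank of a value -/
def rval (s : List ℕ) (v : ℕ) : ℕ := (s.toFinset.filter (fun w => w < v)).card

lemma rval_le (s : List ℕ) (v : ℕ) : rval s v ≤ v := by
  have : s.toFinset.filter (fun w => w < v) ⊆ Finset.range v := by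
    intro x hx; simp at hx ⊢; exact hx.2
  simpa [rval] using (Finset.card_le_card this)

lemma rval_mono (s : List ℕ) {v w : ℕ} (h : v ≤ w) : rval s v ≤ rval s w := by
  apply Finset.card_le_card
  intro x hx; simp at hx ⊢; exact ⟨hx.1, lt_of_lt_of_le hx.2 h⟩

lemma rval_lt_of_mem {s : List ℕ} {v w : ℕ} (hv : v ∈ s) (hvw : v < w) :
    rval s v < rval s w := by
  apply Finset.card_lt_card
  constructor
  · intro x hx; simp at hx ⊢; exact ⟨hx.1, lt_trans hx.2 hvw⟩
  · intro hsub
    have : v ∈ s.toFinset.filter (fun w' => w' < w) := by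
      simp [List.mem_toFinset.2 hv, hvw]
    have := hsub this
    simp at this

lemma rval_le_iff {s : List ℕ} {v w : ℕ} (hv : v ∈ s) (_hw : w ∈ s) :
    rval s v ≤ rval s w ↔ v ≤ w := by
  constructor
  · intro h
    by_contra hlt
    push_neg at hlt
    exact absurd h (not_le.2 (rval_lt_of_mem _hw hlt))
  · exact rval_mono s

lemma red_length (s : List ℕ) : (red s).length = s.length := by simp [red]

lemma red_getD {s : List ℕ} {i : ℕ} (hi : i < s.length) :
    (red s).getD i 0 = rval s (s.getD i 0) := by
  rw [List.getD_eq_getElem _ _ (by simpa [red_length] using hi),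
      List.getD_eq_getElem _ _ hi]
  simp [red, rval]

lemma rval_lt_card {s : List ℕ} {v : ℕ} (hv : v ∈ s) :
    rval s v < s.toFinset.card := by
  apply Finset.card_lt_card
  constructor
  · exact Finset.filter_subset _ _
  · intro hsub
    have := hsub (List.mem_toFinset.2 hv)
    simp at this

lemma isCayley_red (s : List ℕ) : IsCayley (red s) := by
  intro v w hw hvw
  -- image of rval over s.toFinset equals range (s.toFinset.card)
  have himg : s.toFinset.image (rval s) = Finset.range s.toFinset.card := by
    apply Finset.eq_of_subset_of_card_le
    · intro x hx
      simp only [Finset.mem_image] at hx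
      obtain ⟨u, hu, rfl⟩ := hx
      exact Finset.mem_range.2 (rval_lt_card (List.mem_toFinset.1 hu))
    · have hinj : Set.InjOn (rval s) s.toFinset := by
        intro a ha b hb hab
        by_contra hne
        rcases lt_or_gt_of_ne hne with h | h
        · exact absurd hab (ne_of_lt (rval_lt_of_mem (List.mem_toFinset.1 ha) h))
        · exact absurd hab.symm (ne_of_lt (rval_lt_of_mem (List.mem_toFinset.1 hb) h))
      rw [Finset.card_image_of_injOn hinj, Finset.card_range]
  -- w ∈ red s means w = rval s u for some u ∈ s
  have hw' : ∃ u ∈ s, rval s u = w := by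
    simp only [red, List.mem_map] at hw
    obtain ⟨u, hu, h⟩ := hw
    exact ⟨u, hu, h⟩
  obtain ⟨u, hu, rfl⟩ := hw'
  have hwmem : rval s u ∈ Finset.range s.toFinset.card :=
    Finset.mem_range.2 (rval_lt_card hu)
  have hvmem : v ∈ Finset.range s.toFinset.card :=
    Finset.mem_range.2 (lt_of_le_of_lt hvw (Finset.mem_range.1 hwmem))
  rw [← himg] at hvmem
  simp only [Finset.mem_image] at hvmem
  obtain ⟨u', hu', rfl⟩ := hvmem
  simp only [red, List.mem_map]
  exact ⟨u', List.mem_toFinset.1 hu', rfl⟩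

lemma getD_mem {s : List ℕ} {i : ℕ} (hi : i < s.length) : s.getD i 0 ∈ s := by
  rw [List.getD_eq_getElem _ _ hi]; exact List.getElem_mem _

lemma ordIso_red_self (s : List ℕ) : OrdIso (red s) s := by
  refine ⟨red_length s, fun i j hi hj => ?_⟩
  rw [red_length] at hi hj
  rw [red_getD hi, red_getD hj]
  exact rval_le_iff (getD_mem hi) (getD_mem hj)

lemma containsPat_red {s ρ : List ℕ} (h : ContainsPat s ρ) : ContainsPat (red s) ρ := by
  obtain ⟨τ, hsub, hlen, hiso⟩ := h
  refine ⟨τ.map (fun v => (s.toFinset.filter (fun w => w < v)).card),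
    ?_, by simpa using hlen, fun i j hi hj => ?_⟩
  · exact (List.Sublist.map _ hsub : _)
  · have hj' : j < τ.length := hlen ▸ hj
    have hi' : i < τ.length := hlen ▸ hi
    rw [hiso i j hi hj]
    have hgi : (τ.map (fun v => (s.toFinset.filter (fun w => w < v)).card)).getD i 0
        = rval s (τ.getD i 0) := by
      rw [List.getD_eq_getElem _ _ (by simpa using hi'), List.getD_eq_getElem _ _ hi']
      simp [rval]
    have hgj : (τ.map (fun v => (s.toFinset.filter (fun w => w < v)).card)).getD j 0
        = rval s (τ.getD j 0) := by
      rw [List.getD_eq_getElem _ _ (by simpa using hj'), List.getD_eq_getElem _ _ hj']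
      simp [rval]
    rw [hgi, hgj]
    exact (rval_le_iff (hsub.subset (getD_mem hi')) (hsub.subset (getD_mem hj'))).symm

lemma le_foldr_max {l : List ℤ} {x b : ℤ} (hx : x ∈ l) : x ≤ l.foldr max b := by
  induction l with
  | nil => simp at hx
  | cons a t ih =>
    rcases List.mem_cons.1 hx with rfl | h
    · exact le_max_left _ _
    · exact le_trans (ih h) (le_max_right _ _)

lemma foldr_max_le {l : List ℤ} {b c : ℤ} (hb : b ≤ c) (h : ∀ x ∈ l, x ≤ c) :
    l.foldr max b ≤ c := by
  induction l with
  | nil => simpa using hb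
  | cons a t ih =>
    simp only [List.foldr_cons]
    exact max_le (h a (by simp)) (ih (fun x hx => h x (List.mem_cons_of_mem _ hx)))

lemma sub_le_mdd {ρ : List ℕ} {a : ℕ} (ha : a < ρ.length) :
    (ρ.getD a 0 : ℤ) - a ≤ mdd ρ := by
  apply le_foldr_max
  simp only [List.mem_map, List.mem_range]
  exact ⟨a, ha, rfl⟩

lemma mdd_le_of {ρ : List ℕ} {c : ℤ} (hb : -(ρ.length : ℤ) ≤ c)
    (h : ∀ a < ρ.length, (ρ.getD a 0 : ℤ) - a ≤ c) : mdd ρ ≤ c := by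
  apply foldr_max_le hb
  intro x hx
  simp only [List.mem_map, List.mem_range] at hx
  obtain ⟨a, ha, rfl⟩ := hx
  exact h a ha

lemma mdd_nonneg {ρ : List ℕ} (hρ : ρ ≠ []) : 0 ≤ mdd ρ := by
  have h0 : 0 < ρ.length := List.length_pos_iff.2 hρ
  have := sub_le_mdd h0
  push_cast at this
  have h1 : (0 : ℤ) ≤ (ρ.getD 0 0 : ℤ) := by positivity
  linarith

/-- For a Cayley permutation, each entry equals its rank. -/
lemma cayley_getD_eq_rval {ρ : List ℕ} (hC : IsCayley ρ) {a : ℕ} (ha : a < ρ.length) :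
    ρ.getD a 0 = rval ρ (ρ.getD a 0) := by
  have hmem : ρ.getD a 0 ∈ ρ := getD_mem ha
  have : ρ.toFinset.filter (fun w => w < ρ.getD a 0) = Finset.range (ρ.getD a 0) := by
    ext x
    simp only [Finset.mem_filter, Finset.mem_range, List.mem_toFinset]
    constructor
    · exact fun h => h.2
    · intro h
      exact ⟨hC x _ hmem (le_of_lt h), h⟩
  rw [rval, this, Finset.card_range]

/-- rank within the value set is transported along an order isomorphism of lists. -/
lemma ordiso_rval {ρ τ : List ℕ} (h : OrdIso ρ τ) {a : ℕ} (ha : a < ρ.length) :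
    rval ρ (ρ.getD a 0) = rval τ (τ.getD a 0) := by
  obtain ⟨hlen, hiso⟩ := h
  have ha' : a < τ.length := hlen ▸ ha
  -- bijection between filtered value sets
  apply Finset.card_bij' (i := fun v _ => τ.getD (ρ.idxOf v) 0)
    (j := fun w _ => ρ.getD (τ.idxOf w) 0)
  · -- hi
    intro v hv
    simp only [Finset.mem_filter, List.mem_toFinset] at hv ⊢
    obtain ⟨hvmem, hvlt⟩ := hv
    have hidx : ρ.idxOf v < ρ.length := List.idxOf_lt_length_iff.2 hvmem
    have hval : ρ.getD (ρ.idxOf v) 0 = v := by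
      rw [List.getD_eq_getElem _ _ hidx]
      exact List.getElem_idxOf hidx
    constructor
    · exact getD_mem (hlen ▸ hidx)
    · -- τ.getD idx < τ.getD a
      have h1 : ¬ (ρ.getD a 0 ≤ ρ.getD (ρ.idxOf v) 0) := by
        rw [hval]; exact not_le.2 hvlt
      have := (hiso a (ρ.idxOf v) ha hidx)
      have h2 : ¬ (τ.getD a 0 ≤ τ.getD (ρ.idxOf v) 0) := fun hc => h1 (this.2 hc)
      exact not_le.1 h2
  · -- hj
    intro w hw
    simp only [Finset.mem_filter, List.mem_toFinset] at hw ⊢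
    obtain ⟨hwmem, hwlt⟩ := hw
    have hidx : τ.idxOf w < τ.length := List.idxOf_lt_length_iff.2 hwmem
    have hidxρ : τ.idxOf w < ρ.length := hlen ▸ hidx
    have hval : τ.getD (τ.idxOf w) 0 = w := by
      rw [List.getD_eq_getElem _ _ hidx]
      exact List.getElem_idxOf hidx
    constructor
    · exact getD_mem hidxρ
    · have h1 : ¬ (τ.getD a 0 ≤ τ.getD (τ.idxOf w) 0) := by
        rw [hval]; exact not_le.2 hwlt
      have := hiso a (τ.idxOf w) ha hidxρ
      have h2 : ¬ (ρ.getD a 0 ≤ ρ.getD (τ.idxOf w) 0) := fun hc => h1 (this.1 hc)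
      exact not_le.1 h2
  · -- left inverse
    intro v hv
    simp only [Finset.mem_filter, List.mem_toFinset] at hv
    obtain ⟨hvmem, _⟩ := hv
    have hidx : ρ.idxOf v < ρ.length := List.idxOf_lt_length_iff.2 hvmem
    have hval : ρ.getD (ρ.idxOf v) 0 = v := by
      rw [List.getD_eq_getElem _ _ hidx]
      exact List.getElem_idxOf hidx
    set w := τ.getD (ρ.idxOf v) 0 with hw
    have hwmem : w ∈ τ := getD_mem (hlen ▸ hidx)
    have hidx2 : τ.idxOf w < τ.length := List.idxOf_lt_length_iff.2 hwmem
    have hidx2ρ : τ.idxOf w < ρ.length := hlen ▸ hidx2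
    have hval2 : τ.getD (τ.idxOf w) 0 = w := by
      rw [List.getD_eq_getElem _ _ hidx2]
      exact List.getElem_idxOf hidx2
    -- ρ at index (τ.idxOf w) equals ρ at index (ρ.idxOf v) = v
    have e1 : τ.getD (τ.idxOf w) 0 ≤ τ.getD (ρ.idxOf v) 0 := by rw [hval2]
    have e2 : τ.getD (ρ.idxOf v) 0 ≤ τ.getD (τ.idxOf w) 0 := by rw [hval2]
    have l1 := (hiso (τ.idxOf w) (ρ.idxOf v) hidx2ρ hidx).2 e1
    have l2 := (hiso (ρ.idxOf v) (τ.idxOf w) hidx hidx2ρ).2 e2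
    have : ρ.getD (τ.idxOf w) 0 = ρ.getD (ρ.idxOf v) 0 := le_antisymm l1 l2
    rw [this, hval]
  · -- right inverse
    intro w hw
    simp only [Finset.mem_filter, List.mem_toFinset] at hw
    obtain ⟨hwmem, _⟩ := hw
    have hidx : τ.idxOf w < τ.length := List.idxOf_lt_length_iff.2 hwmem
    have hidxρ : τ.idxOf w < ρ.length := hlen ▸ hidx
    have hval : τ.getD (τ.idxOf w) 0 = w := by
      rw [List.getD_eq_getElem _ _ hidx]
      exact List.getElem_idxOf hidx
    set v := ρ.getD (τ.idxOf w) 0 with hv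
    have hvmem : v ∈ ρ := getD_mem hidxρ
    have hidx2 : ρ.idxOf v < ρ.length := List.idxOf_lt_length_iff.2 hvmem
    have hval2 : ρ.getD (ρ.idxOf v) 0 = v := by
      rw [List.getD_eq_getElem _ _ hidx2]
      exact List.getElem_idxOf hidx2
    have e1 : ρ.getD (ρ.idxOf v) 0 ≤ ρ.getD (τ.idxOf w) 0 := by rw [hval2]
    have e2 : ρ.getD (τ.idxOf w) 0 ≤ ρ.getD (ρ.idxOf v) 0 := by rw [hval2]
    have l1 := (hiso (ρ.idxOf v) (τ.idxOf w) hidx2 hidxρ).1 e1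
    have l2 := (hiso (τ.idxOf w) (ρ.idxOf v) hidxρ hidx2).1 e2
    have : τ.getD (ρ.idxOf v) 0 = τ.getD (τ.idxOf w) 0 := le_antisymm l1 l2
    rw [this, hval]

lemma length_eraseIdx' {σ : List ℕ} {x : ℕ} (hx : x < σ.length) :
    (σ.eraseIdx x).length = σ.length - 1 := by
  rw [List.length_eraseIdx]; simp [hx]

lemma getD_eraseIdx_lt {σ : List ℕ} {x i : ℕ} (hx : x < σ.length) (h : i < x) :
    (σ.eraseIdx x).getD i 0 = σ.getD i 0 := by
  have hi : i < (σ.eraseIdx x).length := by rw [length_eraseIdx' hx]; omega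
  rw [List.getD_eq_getElem _ _ hi, List.getD_eq_getElem _ _ (by omega : i < σ.length)]
  exact List.getElem_eraseIdx_of_lt hi h

lemma getD_eraseIdx_ge {σ : List ℕ} {x i : ℕ} (hx : x < σ.length)
    (h : x ≤ i) (hi : i < (σ.eraseIdx x).length) :
    (σ.eraseIdx x).getD i 0 = σ.getD (i + 1) 0 := by
  have hi1 : i + 1 < σ.length := by rw [length_eraseIdx' hx] at hi; omega
  rw [List.getD_eq_getElem _ _ hi, List.getD_eq_getElem _ _ hi1]
  exact List.getElem_eraseIdx_of_ge hi h

/-- If a value appears nowhere else, it is absent after deleting its position. -/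
lemma not_mem_eraseIdx {σ : List ℕ} {x : ℕ} (hx : x < σ.length)
    (huniq : ∀ i < σ.length, i ≠ x → σ.getD i 0 ≠ σ.getD x 0) :
    σ.getD x 0 ∉ σ.eraseIdx x := by
  intro hmem
  obtain ⟨i, hi, hival⟩ := List.mem_iff_getElem.1 hmem
  rw [← List.getD_eq_getElem _ 0 hi] at hival
  rcases lt_or_ge i x with h | h
  · rw [getD_eraseIdx_lt hx h] at hival
    exact huniq i (by omega) (by omega) hival
  · rw [getD_eraseIdx_ge hx h hi] at hival
    have hi1 : i + 1 < σ.length := by rw [length_eraseIdx' hx] at hi; omega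
    exact huniq (i+1) hi1 (by omega) hival

/-- Key removability lemma: erasing a position whose value is unique, or after
which no saturated entry occurs, keeps the reduction an inversion sequence. -/
lemma isInvSeq_red_eraseIdx {σ : List ℕ} (hinv : IsInvSeq σ) {x : ℕ} (hx : x < σ.length)
    (hcase : (∀ i < σ.length, i ≠ x → σ.getD i 0 ≠ σ.getD x 0) ∨
      (∀ i < σ.length, x < i → σ.getD i 0 ≠ i)) :
    IsInvSeq (red (σ.eraseIdx x)) := by
  intro i hi
  rw [red_length] at hi
  rw [red_getD hi]
  rcases lt_or_ge i x with h | h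
  · -- position before x : value unchanged
    rw [getD_eraseIdx_lt hx h]
    exact le_trans (rval_le _ _) (hinv i (by omega))
  · -- position at or after x : original position i+1
    rw [getD_eraseIdx_ge hx h hi]
    have hi1 : i + 1 < σ.length := by rw [length_eraseIdx' hx] at hi; omega
    have hle : σ.getD (i+1) 0 ≤ i + 1 := hinv (i+1) hi1
    rcases Nat.lt_or_ge (σ.getD (i+1) 0) (i+1) with hlt | hge
    · exact le_trans (rval_le _ _) (by omega)
    · -- saturated: σ_{i+1} = i+1
      have hsat : σ.getD (i+1) 0 = i + 1 := le_antisymm hle hge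
      rcases hcase with huniq | hnosat
      · -- unique value case: σ.getD x 0 is not a value of s, and is < i+1
        have hvx : σ.getD x 0 ≤ x := hinv x hx
        have hnotmem := not_mem_eraseIdx hx huniq
        have hsub : (σ.eraseIdx x).toFinset.filter (fun w => w < σ.getD (i+1) 0) ⊆
            (Finset.range (i+1)).erase (σ.getD x 0) := by
          intro u hu
          simp only [Finset.mem_filter, List.mem_toFinset, Finset.mem_erase,
            Finset.mem_range] at hu ⊢
          refine ⟨fun hequ => hnotmem (hequ ▸ hu.1), by omega⟩
        have hcard := Finset.card_le_card hsub
        have : ((Finset.range (i+1)).erase (σ.getD x 0)).card = i := by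
          rw [Finset.card_erase_of_mem (Finset.mem_range.2 (by omega)), Finset.card_range]
          omega
        rw [this] at hcard
        exact hcard
      · exact absurd hsat (hnosat (i+1) hi1 (by omega))

lemma orderEmb_gap {k n : ℕ} (e : Fin k ↪o Fin n) :
    ∀ m (a b : Fin k), (a : ℕ) + m = (b : ℕ) → (e a : ℕ) + m ≤ (e b : ℕ) := by
  intro m
  induction m with
  | zero => intro a b hab; have : a = b := Fin.ext (by omega); simp [this]
  | succ m ih =>
    intro a b hab
    have hbk : (a : ℕ) + m < k := by omega
    set b' : Fin k := ⟨(a : ℕ) + m, hbk⟩ with hb'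
    have h1 : (e a : ℕ) + m ≤ (e b' : ℕ) := ih a b' rfl
    have h2 : (e b' : ℕ) < (e b : ℕ) := by
      have : b' < b := by
        rw [Fin.lt_def]; simp [hb']; omega
      exact e.strictMono this
    omega

lemma sublist_of_avoiding {w σ : List ℕ} (e : Fin w.length ↪o Fin σ.length)
    (hval : ∀ ix, w.get ix = σ.get (e ix)) {x : ℕ} (hx : x < σ.length)
    (havoid : ∀ ix, (e ix : ℕ) ≠ x) : List.Sublist w (σ.eraseIdx x) := by
  rw [List.sublist_iff_exists_fin_orderEmbedding_get_eq]
  have hlen : (σ.eraseIdx x).length = σ.length - 1 := length_eraseIdx' hx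
  have hbound : ∀ ix : Fin w.length,
      (if (e ix : ℕ) < x then (e ix : ℕ) else (e ix : ℕ) - 1) < (σ.eraseIdx x).length := by
    intro ix
    have h1 : (e ix : ℕ) < σ.length := (e ix).isLt
    have h2 : (e ix : ℕ) ≠ x := havoid ix
    rw [hlen]
    split <;> omega
  refine ⟨OrderEmbedding.ofStrictMono
    (fun ix => ⟨if (e ix : ℕ) < x then (e ix : ℕ) else (e ix : ℕ) - 1, hbound ix⟩) ?_, ?_⟩
  · intro a b hab
    have h1 : (e a : ℕ) < (e b : ℕ) := e.strictMono hab
    have h2 : (e a : ℕ) ≠ x := havoid a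
    have h3 : (e b : ℕ) ≠ x := havoid b
    rw [Fin.lt_def]
    simp only
    split <;> split <;> omega
  · intro ix
    rw [hval ix]
    have h2 : (e ix : ℕ) ≠ x := havoid ix
    have h1 : (e ix : ℕ) < σ.length := (e ix).isLt
    show σ.get (e ix) = (σ.eraseIdx x).get ⟨_, hbound ix⟩
    rw [List.get_eq_getElem, List.get_eq_getElem]
    simp only
    split
    · next hc =>
      rw [List.getElem_eraseIdx_of_lt (l := σ) (i := x) (by rw [length_eraseIdx' hx]; omega) hc]
    · next hc =>
      rw [List.getElem_eraseIdx_of_ge (l := σ) (i := x) (by rw [length_eraseIdx' hx]; omega) (by omega)]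
      congr 1
      omega

lemma card_filter_val_lt {N L : ℕ} (h : L ≤ N) :
    (Finset.univ.filter (fun i : Fin N => (i : ℕ) < L)).card = L := by
  have key : (Finset.univ.filter (fun i : Fin N => (i : ℕ) < L)).card
      = (Finset.range L).card := by
    refine Finset.card_bij' (fun (i : Fin N) (_ : i ∈ Finset.univ.filter (fun i : Fin N => (i : ℕ) < L)) => (i : ℕ))
      (fun u hu => (⟨u, lt_of_lt_of_le (Finset.mem_range.1 hu) h⟩ : Fin N)) ?_ ?_ ?_ ?_
    · intro a ha; simp only [Finset.mem_filter] at ha; exact Finset.mem_range.2 ha.2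
    · intro u hu; simp only [Finset.mem_filter, Finset.mem_univ, true_and]
      exact Finset.mem_range.1 hu
    · intro a ha; simp
    · intro u hu; simp
  rw [key, Finset.card_range]

theorem stmt13 (ρ σ : List ℕ) (hρ : ρ ≠ []) (hC : IsCayley ρ)
    (hmin : IsMinimalFor ρ σ) :
    (ρ.length : ℤ) + mdd ρ ≤ (σ.length : ℤ) ∧
    (σ.length : ℤ) ≤ (ρ.length : ℤ) + 2 * mdd ρ ∧
    (σ.length : ℤ) ≤ 3 * (ρ.length : ℤ) - 2 := by
  obtain ⟨hinvσ, hCσ, hpat, hminimal⟩ := hmin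
  obtain ⟨w, hwsub, hwiso⟩ := hpat
  have hlen : ρ.length = w.length := hwiso.1
  have hk : 0 < ρ.length := List.length_pos_iff.2 hρ
  have hnk : ρ.length ≤ σ.length := hlen ▸ hwsub.length_le
  have n0 : 0 < σ.length := lt_of_lt_of_le hk hnk
  obtain ⟨e, he⟩ := List.sublist_iff_exists_fin_orderEmbedding_get_eq.1 hwsub
  -- pointwise values of ρ as ranks in w
  have hρval : ∀ a, (ha : a < ρ.length) → ρ.getD a 0 = rval w (w.getD a 0) := by
    intro a ha
    rw [cayley_getD_eq_rval hC ha]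
    exact ordiso_rval hwiso ha
  have hg : ∀ i : Fin σ.length, σ.get i ≤ (i : ℕ) := by
    intro i
    have := hinvσ (i : ℕ) i.isLt
    rwa [List.getD_eq_getElem _ _ i.isLt] at this
  have hwval : ∀ a, (ha : a < w.length) → w.getD a 0 = σ.get (e ⟨a, ha⟩) := by
    intro a ha
    rw [List.getD_eq_getElem _ _ ha]
    exact he ⟨a, ha⟩
  -- Part 1 : lower bound
  have part1 : (ρ.length : ℤ) + mdd ρ ≤ (σ.length : ℤ) := by
    have hm : mdd ρ ≤ (σ.length : ℤ) - ρ.length := by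
      apply mdd_le_of
      · have : (ρ.length : ℤ) ≤ (σ.length : ℤ) := by exact_mod_cast hnk
        linarith
      · intro a ha
        have haw : a < w.length := hlen ▸ ha
        have h1 : ρ.getD a 0 ≤ w.getD a 0 := by
          rw [hρval a ha]; exact rval_le _ _
        have h2 : w.getD a 0 ≤ ((e ⟨a, haw⟩ : Fin σ.length) : ℕ) := by
          rw [hwval a haw]; exact hg _
        have hlast : w.length - 1 < w.length := by omega
        have h3 := orderEmb_gap e (w.length - 1 - a) ⟨a, haw⟩ ⟨w.length - 1, hlast⟩
          (by simp; omega)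
        have h4 : ((e ⟨w.length - 1, hlast⟩ : Fin σ.length) : ℕ) < σ.length :=
          (e _).isLt
        have h5 : a < w.length := haw
        omega
    linarith
  -- Part 3 ingredient : mdd ρ ≤ ρ.length - 1
  have hdk : mdd ρ ≤ (ρ.length : ℤ) - 1 := by
    apply mdd_le_of
    · have : (1 : ℤ) ≤ (ρ.length : ℤ) := by exact_mod_cast hk
      linarith
    · intro a ha
      have h1 : rval ρ (ρ.getD a 0) < ρ.toFinset.card := rval_lt_card (getD_mem ha)
      have h2 : ρ.toFinset.card ≤ ρ.length := List.toFinset_card_le ρ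
      have h3 : ρ.getD a 0 = rval ρ (ρ.getD a 0) := cayley_getD_eq_rval hC ha
      omega
  -- Part 2 : upper bound
  have part2 : (σ.length : ℤ) ≤ (ρ.length : ℤ) + 2 * mdd ρ := by
    set O : Finset (Fin σ.length) := Finset.univ.map e.toEmbedding with hO
    have hOcard : O.card = w.length := by
      rw [hO, Finset.card_map, Finset.card_univ, Fintype.card_fin]
    have hmemO : ∀ i : Fin σ.length, i ∈ O ↔ ∃ ix, e ix = i := by
      intro i
      simp [hO, Finset.mem_map]
    -- removability
    have hremove : ∀ x : Fin σ.length, x ∉ O →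
        ¬((∀ i < σ.length, i ≠ (x : ℕ) → σ.getD i 0 ≠ σ.getD x 0) ∨
          (∀ i < σ.length, (x : ℕ) < i → σ.getD i 0 ≠ i)) := by
      intro x hxO hcase
      have havoid : ∀ ix, ((e ix : Fin σ.length) : ℕ) ≠ (x : ℕ) := by
        intro ix hc
        exact hxO ((hmemO x).2 ⟨ix, Fin.ext hc⟩)
      have hxlt : (x : ℕ) < σ.length := x.isLt
      have hsub2 : List.Sublist w (σ.eraseIdx (x : ℕ)) :=
        sublist_of_avoiding e he hxlt havoid
      have hτinv : IsInvSeq (red (σ.eraseIdx (x : ℕ))) :=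
        isInvSeq_red_eraseIdx hinvσ hxlt hcase
      have hτC : IsCayley (red (σ.eraseIdx (x : ℕ))) := isCayley_red _
      have hτpat : ContainsPat (red (σ.eraseIdx (x : ℕ))) ρ :=
        containsPat_red ⟨w, hsub2, hwiso⟩
      have hσpat : ContainsPat σ (red (σ.eraseIdx (x : ℕ))) :=
        ⟨σ.eraseIdx (x : ℕ), List.eraseIdx_sublist σ (x : ℕ), ordIso_red_self _⟩
      have heq := hminimal _ hτinv hτC hτpat hσpat
      have hlen2 := congrArg List.length heq
      rw [red_length, length_eraseIdx' hxlt] at hlen2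
      omega
    have hforced : ∀ x : Fin σ.length, x ∉ O →
        (∃ i, i < σ.length ∧ i ≠ (x : ℕ) ∧ σ.getD i 0 = σ.getD x 0) ∧
        (∃ i, i < σ.length ∧ (x : ℕ) < i ∧ σ.getD i 0 = i) := by
      intro x hxO
      have := hremove x hxO
      push_neg at this
      obtain ⟨h1, h2⟩ := this
      obtain ⟨i1, hi1, hi1x, hi1v⟩ := h1
      obtain ⟨i2, hi2, hi2x, hi2v⟩ := h2
      exact ⟨⟨i1, hi1, hi1x, hi1v⟩, ⟨i2, hi2, hi2x, hi2v⟩⟩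
    -- the largest saturated position
    set L := Nat.findGreatest (fun m => σ.getD m 0 = m) (σ.length - 1) with hLdef
    have hP0 : σ.getD 0 0 = 0 := Nat.le_zero.1 (hinvσ 0 n0)
    have hPL : σ.getD L 0 = L := by
      rw [hLdef]
      exact Nat.findGreatest_spec (P := fun m => σ.getD m 0 = m) (m := 0) (by omega) hP0
    have hLle : L ≤ σ.length - 1 := by
      rw [hLdef]
      exact Nat.findGreatest_le (P := fun m => σ.getD m 0 = m) _
    have hLlt : L < σ.length := by omega
    have hLmax : ∀ m, σ.getD m 0 = m → m < σ.length → m ≤ L := by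
      intro m hm hmn
      by_contra hcon
      push_neg at hcon
      rw [hLdef] at hcon
      exact Nat.findGreatest_is_greatest (P := fun m => σ.getD m 0 = m) hcon (by omega) hm
    have hLO : (⟨L, hLlt⟩ : Fin σ.length) ∈ O := by
      by_contra hno
      obtain ⟨-, ⟨i, hin, hLi, hsi⟩⟩ := hforced ⟨L, hLlt⟩ hno
      have := hLmax i hsi hin
      simp only at hLi
      omega
    obtain ⟨j, hej⟩ := (hmemO _).1 hLO
    -- non-O positions lie strictly below L
    have hxL : ∀ x : Fin σ.length, x ∉ O → (x : ℕ) < L := by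
      intro x hxO
      obtain ⟨-, ⟨i, hin, hxi, hsi⟩⟩ := hforced x hxO
      have := hLmax i hsi hin
      omega
    -- counting positions
    set A : Finset (Fin σ.length) := Oᶜ with hA
    have hAcard : A.card + w.length = σ.length := by
      have h1 : A.card = Fintype.card (Fin σ.length) - O.card := Finset.card_compl O
      have h2 : O.card ≤ Fintype.card (Fin σ.length) := Finset.card_le_univ O
      rw [Fintype.card_fin] at h1 h2
      omega
    have hcount1 : A.card + (j : ℕ) ≤ L := by
      set Ej : Finset (Fin σ.length) :=
        (Finset.univ.filter (fun a : Fin w.length => (a : ℕ) < (j : ℕ))).image e with hEj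
      have hEjcard : Ej.card = (j : ℕ) := by
        rw [hEj, Finset.card_image_of_injective _ e.injective,
          card_filter_val_lt (le_of_lt j.isLt)]
      have hEjO : Ej ⊆ O := by
        intro i hi
        simp only [hEj, Finset.mem_image] at hi
        obtain ⟨a, -, rfl⟩ := hi
        exact (hmemO _).2 ⟨a, rfl⟩
      have hdisj : Disjoint A Ej := by
        rw [Finset.disjoint_left]
        intro i hiA hiEj
        rw [hA, Finset.mem_compl] at hiA
        exact hiA (hEjO hiEj)
      set Blt : Finset (Fin σ.length) :=
        Finset.univ.filter (fun i : Fin σ.length => (i : ℕ) < L) with hBlt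
      have hBltcard : Blt.card = L := card_filter_val_lt (le_of_lt hLlt)
      have hsubB : A ∪ Ej ⊆ Blt := by
        intro i hi
        rcases Finset.mem_union.1 hi with h | h
        · simp only [hBlt, Finset.mem_filter, Finset.mem_univ, true_and]
          rw [hA, Finset.mem_compl] at h
          exact hxL i h
        · simp only [hEj, Finset.mem_image] at h
          obtain ⟨a, ha, rfl⟩ := h
          simp only [Finset.mem_filter, Finset.mem_univ, true_and] at ha
          simp only [hBlt, Finset.mem_filter, Finset.mem_univ, true_and]
          have : e a < e j := e.strictMono (by rwa [Fin.lt_def])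
          rw [hej] at this
          exact this
      have := Finset.card_le_card hsubB
      rw [Finset.card_union_of_disjoint hdisj, hEjcard, hBltcard] at this
      omega
    -- counting values
    set V := σ.toFinset with hV
    set W := w.toFinset with hW
    have hrangeL : V.filter (fun v => v < L) = Finset.range L := by
      ext u
      simp only [Finset.mem_filter, Finset.mem_range, hV, List.mem_toFinset]
      constructor
      · exact fun h => h.2
      · intro h
        have hLmem : L ∈ σ := by
          have := getD_mem hLlt
          rwa [hPL] at this
        exact ⟨hCσ u L hLmem (le_of_lt h), h⟩
    have hcount2 : L ≤ (W.filter (fun v => v < L)).card + (V \ W).card := by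
      have hsplit : V.filter (fun v => v < L) ⊆ W.filter (fun v => v < L) ∪ (V \ W) := by
        intro u hu
        simp only [Finset.mem_filter] at hu
        by_cases hc : u ∈ W
        · exact Finset.mem_union_left _ (Finset.mem_filter.2 ⟨hc, hu.2⟩)
        · exact Finset.mem_union_right _ (Finset.mem_sdiff.2 ⟨hu.1, hc⟩)
      have h1 := Finset.card_le_card hsplit
      have h2 := Finset.card_union_le (W.filter (fun v => v < L)) (V \ W)
      rw [hrangeL, Finset.card_range] at h1
      omega
    -- ρ at index j equals the number of occurrence values below L
    have hjρ : (j : ℕ) < ρ.length := by rw [hlen]; exact j.isLt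
    have hwj : w.getD (j : ℕ) 0 = L := by
      rw [hwval (j : ℕ) j.isLt]
      have : (⟨(j : ℕ), j.isLt⟩ : Fin w.length) = j := Fin.eta j j.isLt
      rw [this, hej]
      rw [List.get_eq_getElem, ← List.getD_eq_getElem σ 0 hLlt]
      exact hPL
    have hρj : ρ.getD (j : ℕ) 0 = (W.filter (fun v => v < L)).card := by
      rw [hρval (j : ℕ) hjρ, hwj]
      rfl
    have hρjle : (ρ.getD (j : ℕ) 0 : ℤ) ≤ (j : ℕ) + mdd ρ := by
      have := sub_le_mdd hjρ
      linarith
    -- duplicated values : each value outside W occupies at least two non-O positions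
    have h2q : 2 * (V \ W).card ≤ A.card := by
      set P : ℕ → Finset (Fin σ.length) :=
        fun t => Finset.univ.filter (fun i : Fin σ.length => σ.get i = t) with hP
      have hWofO : ∀ i : Fin σ.length, i ∈ O → σ.get i ∈ W := by
        intro i hi
        obtain ⟨ix, rfl⟩ := (hmemO i).1 hi
        rw [hW, List.mem_toFinset, ← he ix]
        exact List.get_mem w ix
      have hPA : ∀ t ∈ V \ W, P t ⊆ A := by
        intro t ht i hi
        simp only [hP, Finset.mem_filter, Finset.mem_univ, true_and] at hi
        rw [hA, Finset.mem_compl]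
        intro hiO
        have := hWofO i hiO
        rw [hi] at this
        exact (Finset.mem_sdiff.1 ht).2 this
      have hP2 : ∀ t ∈ V \ W, 2 ≤ (P t).card := by
        intro t ht
        have htV : t ∈ σ := by
          have := (Finset.mem_sdiff.1 ht).1
          rwa [hV, List.mem_toFinset] at this
        obtain ⟨ix, hix, hixv⟩ := List.mem_iff_getElem.1 htV
        set x0 : Fin σ.length := ⟨ix, hix⟩ with hx0
        have hx0v : σ.get x0 = t := hixv
        have hx0O : x0 ∉ O := by
          intro hc
          have := hWofO x0 hc
          rw [hx0v] at this
          exact (Finset.mem_sdiff.1 ht).2 this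
        obtain ⟨⟨i1, hi1, hi1x, hi1v⟩, -⟩ := hforced x0 hx0O
        set i1' : Fin σ.length := ⟨i1, hi1⟩ with hi1'
        have hi1get : σ.get i1' = t := by
          rw [List.get_eq_getElem, ← List.getD_eq_getElem σ 0 hi1, hi1v]
          rw [List.getD_eq_getElem σ 0 x0.isLt]
          exact hx0v
        have hne : i1' ≠ x0 := by
          intro hc
          apply hi1x
          have := congrArg (fun z : Fin σ.length => (z : ℕ)) hc
          simpa [hi1', hx0] using this
        apply Finset.one_lt_card.2
        refine ⟨i1', ?_, x0, ?_, hne⟩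
        · simp only [hP, Finset.mem_filter, Finset.mem_univ, true_and]; exact hi1get
        · simp only [hP, Finset.mem_filter, Finset.mem_univ, true_and]; exact hx0v
      have hdisjP : ∀ t1 ∈ (V \ W), ∀ t2 ∈ (V \ W), t1 ≠ t2 → Disjoint (P t1) (P t2) := by
        intro t1 _ t2 _ hne
        rw [Finset.disjoint_left]
        intro i h1 h2
        simp only [hP, Finset.mem_filter, Finset.mem_univ, true_and] at h1 h2
        exact hne (h1.symm.trans h2)
      have hbi := Finset.card_biUnion hdisjP
      have hsubA : (V \ W).biUnion P ⊆ A := by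
        intro i hi
        obtain ⟨t, ht, hit⟩ := Finset.mem_biUnion.1 hi
        exact hPA t ht hit
      have h1 := Finset.card_le_card hsubA
      rw [hbi] at h1
      have h2 : 2 * (V \ W).card ≤ ∑ t ∈ (V \ W), (P t).card := by
        rw [two_mul]
        calc (V \ W).card + (V \ W).card = ∑ _t ∈ (V \ W), 2 := by
              rw [Finset.sum_const, smul_eq_mul]; ring
          _ ≤ ∑ t ∈ (V \ W), (P t).card := Finset.sum_le_sum hP2
      omega
    -- final arithmetic
    have c1 : ((A.card : ℤ)) + (w.length : ℤ) = (σ.length : ℤ) := by exact_mod_cast hAcard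
    have c2 : ((A.card : ℤ)) + ((j : ℕ) : ℤ) ≤ (L : ℤ) := by exact_mod_cast hcount1
    have c3 : (L : ℤ) ≤ ((W.filter (fun v => v < L)).card : ℤ) + ((V \ W).card : ℤ) := by
      exact_mod_cast hcount2
    have c4 : (ρ.getD (j : ℕ) 0 : ℤ) = ((W.filter (fun v => v < L)).card : ℤ) := by
      exact_mod_cast hρj
    have c5 : 2 * ((V \ W).card : ℤ) ≤ (A.card : ℤ) := by exact_mod_cast h2q
    have c6 : ((ρ.length : ℤ)) = (w.length : ℤ) := by exact_mod_cast hlen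
    linarith
  refine ⟨part1, part2, ?_⟩
  linarith
end

section
/- For every finite set P of nonempty Cayley permutations, there exists a finite set Q of sequences that are simultaneously inversion sequences and Cayley permutations such that an inversion sequence avoids every pattern in P if and only if it avoids every pattern in Q. -/
/-- rank of a value -/
def rk (σ : List ℕ) (v : ℕ) : ℕ := (σ.toFinset.filter (fun w => w < v)).card

lemma red_eq_map (σ : List ℕ) : red σ = σ.map (rk σ) := rfl

lemma rk_mono (σ : List ℕ) {a b : ℕ} (h : a ≤ b) : rk σ a ≤ rk σ b := by
  apply Finset.card_le_card
  intro x hx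
  simp only [Finset.mem_filter] at *
  exact ⟨hx.1, lt_of_lt_of_le hx.2 h⟩

lemma rk_lt_of_mem (σ : List ℕ) {a b : ℕ} (hb : b ∈ σ) (h : b < a) : rk σ b < rk σ a := by
  apply Finset.card_lt_card
  constructor
  · intro x hx
    simp only [Finset.mem_filter] at *
    exact ⟨hx.1, lt_trans hx.2 h⟩
  · intro hsub
    have : b ∈ σ.toFinset.filter (fun w => w < b) := hsub (by simp [hb, h])
    simp at this
lemma rk_le_iff (σ : List ℕ) {a b : ℕ} (hb : b ∈ σ) : rk σ a ≤ rk σ b ↔ a ≤ b := by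
  constructor
  · intro h
    by_contra hab
    exact absurd (rk_lt_of_mem σ hb (not_le.mp hab)) (by omega)
  · exact rk_mono σ

lemma rk_lt_distv (σ : List ℕ) {a : ℕ} (ha : a ∈ σ) : rk σ a < σ.toFinset.card := by
  apply Finset.card_lt_card
  constructor
  · exact Finset.filter_subset _ _
  · intro hsub
    have : a ∈ σ.toFinset.filter (fun w => w < a) := hsub (by simp [ha])
    simp at this

lemma getD_mem_s15 {σ : List ℕ} {i : ℕ} (h : i < σ.length) : σ.getD i 0 ∈ σ := by
  rw [List.getD_eq_getElem _ _ h]; exact List.getElem_mem _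

lemma red_getD_s15 {σ : List ℕ} {i : ℕ} (h : i < σ.length) :
    (red σ).getD i 0 = rk σ (σ.getD i 0) := by
  have h' : i < (red σ).length := by simpa [red] using h
  rw [List.getD_eq_getElem _ _ h', List.getD_eq_getElem _ _ h]
  simp [red, rk]

lemma length_red (σ : List ℕ) : (red σ).length = σ.length := by simp [red]

lemma ordIso_red (τ : List ℕ) : OrdIso (red τ) τ := by
  refine ⟨length_red τ, ?_⟩
  intro i j hi hj
  rw [length_red] at hi hj
  rw [red_getD_s15 hi, red_getD_s15 hj]
  exact rk_le_iff τ (getD_mem_s15 hj)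

lemma exists_rk_eq (τ : List ℕ) : ∀ b ∈ τ, ∀ v ≤ rk τ b, ∃ a ∈ τ, rk τ a = v := by
  intro b
  induction b using Nat.strong_induction_on with
  | _ b ih =>
    intro hb v hv
    rcases eq_or_lt_of_le hv with h | h
    · exact ⟨b, hb, h.symm⟩
    · -- v < rk τ b, so filter nonempty
      have hne : (τ.toFinset.filter (fun w => w < b)).Nonempty := by
        rw [← Finset.card_pos]
        have : 0 < rk τ b := by omega
        exact this
      obtain ⟨b', hb'mem0, hmax⟩ := Finset.exists_max_image _ id hne
      · have hb'mem : b' ∈ τ ∧ b' < b := by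
          simpa only [Finset.mem_filter, List.mem_toFinset] using hb'mem0
        have hstep : rk τ b = rk τ b' + 1 := by
          have : τ.toFinset.filter (fun w => w < b) = insert b' (τ.toFinset.filter (fun w => w < b')) := by
            ext x
            simp only [Finset.mem_insert, Finset.mem_filter, List.mem_toFinset]
            constructor
            · intro ⟨hx1, hx2⟩
              rcases eq_or_lt_of_le (hmax x (by simp [hx1, hx2]) : x ≤ b') with h | h
              · exact Or.inl h
              · exact Or.inr ⟨hx1, h⟩
            · rintro (rfl | ⟨hx1, hx2⟩)
              · exact ⟨hb'mem.1, hb'mem.2⟩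
              · exact ⟨hx1, lt_trans hx2 hb'mem.2⟩
          rw [rk, this, Finset.card_insert_of_notMem (by simp)]; rfl
        exact ih b' hb'mem.2 hb'mem.1 v (by omega)

section P2
lemma red_cayley (τ : List ℕ) : IsCayley (red τ) := by
  intro v w hw hvw
  rw [red_eq_map] at hw ⊢
  obtain ⟨b, hb, rfl⟩ := List.mem_map.mp hw
  obtain ⟨a, ha, hrk⟩ := exists_rk_eq τ b hb v hvw
  exact List.mem_map.mpr ⟨a, ha, hrk⟩

lemma containsPat_trans {σ τ ρ : List ℕ} (h1 : ContainsPat σ τ) (h2 : ContainsPat τ ρ) :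
    ContainsPat σ ρ := by
  obtain ⟨τ₁, h1s, h1o⟩ := h1
  obtain ⟨τ₂, h2s, h2o⟩ := h2
  obtain ⟨is, h2eq, h2p⟩ := List.sublist_eq_map_getElem h2s
  have hlen : τ.length = τ₁.length := h1o.1
  let is' : List (Fin τ₁.length) := is.map (Fin.cast hlen)
  refine ⟨is'.map τ₁.get, ?_, ?_⟩
  · refine (List.map_getElem_sublist ?_).trans h1s
    simp only [is', List.pairwise_map]
    exact h2p.imp (fun h => h)
  · have hl2 : ρ.length = τ₂.length := h2o.1
    have hlis : τ₂.length = is.length := by rw [h2eq]; simp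
    have hlen3 : (is'.map τ₁.get).length = is.length := by simp [is']
    refine ⟨by rw [hl2, hlis, hlen3], ?_⟩
    intro i j hi hj
    have hi' : i < is.length := by omega
    have hj' : j < is.length := by omega
    have hi2 : i < τ₂.length := by omega
    have hj2 : j < τ₂.length := by omega
    have e2 : ∀ m (hm : m < is.length), τ₂.getD m 0 = τ.getD (is[m]).val 0 := by
      intro m hm
      rw [h2eq]
      rw [List.getD_eq_getElem _ _ (by simpa using hm)]
      rw [List.getD_eq_getElem _ _ (is[m]).isLt]
      simp
    have e3 : ∀ m (hm : m < is.length), (is'.map τ₁.get).getD m 0 = τ₁.getD (is[m]).val 0 := by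
      intro m hm
      rw [List.getD_eq_getElem _ _ (by omega)]
      rw [List.getD_eq_getElem _ _ (by rw [← hlen]; exact (is[m]).isLt)]
      simp [is']
    rw [(h2o.2 i j hi hj : _), e2 i hi', e2 j hj', e3 i hi', e3 j hj']
    exact h1o.2 _ _ (is[i]).isLt (is[j]).isLt
end P2

section P3
def sub (σ : List ℕ) (T : Finset ℕ) : List ℕ := (T.sort (·≤·)).map (fun i => σ.getD i 0)

lemma length_sub (σ : List ℕ) (T : Finset ℕ) : (sub σ T).length = T.card := by
  simp [sub]

lemma map_getD_sublist {σ : List ℕ} {L : List ℕ} (hs : L.Pairwise (·<·))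
    (hlt : ∀ t ∈ L, t < σ.length) : (L.map (fun i => σ.getD i 0)).Sublist σ := by
  have h1 : L.map (fun i => σ.getD i 0)
      = (L.attach.map (fun x => (⟨x.1, hlt x.1 x.2⟩ : Fin σ.length))).map σ.get := by
    rw [List.map_map]
    conv_lhs => rw [← List.attach_map_subtype_val L]
    rw [List.map_map]
    apply List.map_congr_left
    intro x _
    show σ.getD x.1 0 = _
    rw [List.getD_eq_getElem _ _ (hlt x.1 x.2)]
    rfl
  rw [h1]
  apply List.map_getElem_sublist
  simp only [List.pairwise_map]
  have hv : L.attach.map Subtype.val = L := by simp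
  have hp : List.Pairwise (fun (x y : {t // t ∈ L}) => x.1 < y.1) L.attach := by
    have h2 := (List.pairwise_map (f := Subtype.val)
      (R := (·<·:ℕ→ℕ→Prop)) (l := L.attach)).mp (by rw [hv]; exact hs)
    exact h2
  exact hp.imp (by intro a b h; simpa using h)

lemma sub_sublist {σ : List ℕ} {T : Finset ℕ} (h : ∀ t ∈ T, t < σ.length) :
    (sub σ T).Sublist σ := by
  apply map_getD_sublist ((Finset.sortedLT_sort T).pairwise)
  intro t ht
  exact h t (by simpa using (Finset.mem_sort (α := ℕ) (·≤·)).mp ht)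

lemma sub_mono {σ : List ℕ} {S T : Finset ℕ} (h : S ⊆ T) : (sub σ S).Sublist (sub σ T) := by
  apply List.Sublist.map
  apply List.sublist_of_subperm_of_pairwise (r := (·≤·:ℕ→ℕ→Prop))
  · apply List.Nodup.subperm (Finset.sort_nodup _ _)
    intro x hx
    rw [Finset.mem_sort] at hx
    rw [Finset.mem_sort]
    exact h hx
  · exact Finset.pairwise_sort _ _
  · exact Finset.pairwise_sort _ _

lemma sort_filter_card (T : Finset ℕ) {i : ℕ} (hi : i < T.card) :
    (T.filter (fun x => x < (T.sort (·≤·)).getD i 0)).card = i := by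
  set L := T.sort (·≤·) with hL
  have hlen : L.length = T.card := Finset.length_sort _
  have hi' : i < L.length := by omega
  have hso : L.Pairwise (·<·) := (Finset.sortedLT_sort T).pairwise
  have hget : ∀ {j k} (hj : j < L.length) (hk : k < L.length), j < k → L[j] < L[k] := by
    intro j k hj hk hjk
    exact List.pairwise_iff_get.mp hso ⟨j, hj⟩ ⟨k, hk⟩ hjk
  have key : T.filter (fun x => x < L.getD i 0) = (L.take i).toFinset := by
    ext x
    simp only [Finset.mem_filter, List.mem_toFinset]
    rw [List.getD_eq_getElem _ _ hi']
    constructor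
    · rintro ⟨hxT, hxlt⟩
      have hxL : x ∈ L := by rw [hL, Finset.mem_sort]; exact hxT
      obtain ⟨j, hj, rfl⟩ := List.getElem_of_mem hxL
      have hji : j < i := by
        by_contra hcon
        push_neg at hcon
        rcases eq_or_lt_of_le hcon with rfl | hlt
        · omega
        · exact absurd (hget hi' hj hlt) (by omega)
      have : (L.take i)[j]'(by simp [List.length_take]; omega) = L[j] := by
        rw [List.getElem_take]
      rw [← this]
      exact List.getElem_mem _
    · intro hx
      obtain ⟨j, hj, rfl⟩ := List.getElem_of_mem hx
      have hjlen : j < i := by simp [List.length_take] at hj; omega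
      have heq : (L.take i)[j] = L[j]'(by omega) := by rw [List.getElem_take]
      constructor
      · rw [heq, ← Finset.mem_sort (α := ℕ) (·≤·), ← hL]
        exact List.getElem_mem _
      · rw [heq]; exact hget (by omega) hi' hjlen
  have hnodup : L.Nodup := by rw [hL]; exact Finset.sort_nodup _ _
  rw [key, List.toFinset_card_of_nodup (hnodup.sublist (List.take_sublist _ _)),
    List.length_take]
  omega

lemma exists_filter_card_eq (T : Finset ℕ) {m : ℕ} (hm : m < T.card) :
    ∃ s ∈ T, (T.filter (fun x => x < s)).card = m := by
  refine ⟨(T.sort (·≤·)).getD m 0, ?_, sort_filter_card T hm⟩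
  rw [← Finset.mem_sort (α := ℕ) (·≤·)]
  apply getD_mem_s15
  rw [Finset.length_sort]; exact hm
end P3

section P4

lemma indexOf_le_of_getElem {l : List ℕ} : ∀ {j} (hj : j < l.length), l.idxOf (l[j]) ≤ j := by
  induction l with
  | nil => intro j hj; simp at hj
  | cons a t ih =>
    intro j hj
    cases j with
    | zero => simp [List.idxOf_cons]
    | succ j =>
      have hj' : j < t.length := by simpa using hj
      rw [List.getElem_cons_succ, List.idxOf_cons]
      cases h : (a == t[j]'hj') with
      | true => simp
      | false => simpa using Nat.succ_le_succ (ih hj')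

lemma indexOf_le_of_getD {σ : List ℕ} {j : ℕ} (hj : j < σ.length) :
    σ.idxOf (σ.getD j 0) ≤ j := by
  rw [List.getD_eq_getElem _ _ hj]
  exact indexOf_le_of_getElem hj

lemma appear_card (σ : List ℕ) (hσ : IsInvSeq σ) :
    ∀ v, v ≤ σ.length → ((Finset.range v).image (fun i => σ.getD i 0)).card
      + (((Finset.range σ.length).filter (fun s => σ.idxOf (σ.getD s 0) < s)).filter
          (fun x => x < v)).card = v := by
  intro v
  induction v with
  | zero => intro _; simp
  | succ v ih =>
    intro hv
    have hvN : v < σ.length := hv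
    have hA : (Finset.range (v+1)).image (fun i => σ.getD i 0)
        = insert (σ.getD v 0) ((Finset.range v).image (fun i => σ.getD i 0)) := by
      rw [Finset.range_add_one, Finset.image_insert]
    by_cases hc : σ.idxOf (σ.getD v 0) < v
    · -- v is a repeat position
      have hmemA : σ.getD v 0 ∈ (Finset.range v).image (fun i => σ.getD i 0) := by
        refine Finset.mem_image.mpr ⟨σ.idxOf (σ.getD v 0), Finset.mem_range.mpr hc, ?_⟩
        have hm : σ.getD v 0 ∈ σ := getD_mem_s15 hvN
        rw [List.getD_eq_getElem _ _ (List.idxOf_lt_length_of_mem hm)]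
        exact List.getElem_idxOf (List.idxOf_lt_length_of_mem hm)
      have hAcard : ((Finset.range (v+1)).image (fun i => σ.getD i 0)).card
          = ((Finset.range v).image (fun i => σ.getD i 0)).card := by
        rw [hA, Finset.insert_eq_self.mpr hmemA]
      have hR : ((Finset.range σ.length).filter (fun s => σ.idxOf (σ.getD s 0) < s)).filter
            (fun x => x < v+1)
          = insert v (((Finset.range σ.length).filter (fun s => σ.idxOf (σ.getD s 0) < s)).filter
            (fun x => x < v)) := by
        ext x
        simp only [Finset.mem_insert, Finset.mem_filter, Finset.mem_range]
        constructor
        · rintro ⟨⟨h1, h2⟩, h3⟩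
          rcases Nat.lt_succ_iff_lt_or_eq.mp h3 with h | rfl
          · exact Or.inr ⟨⟨h1, h2⟩, h⟩
          · exact Or.inl rfl
        · rintro (rfl | ⟨⟨h1, h2⟩, h3⟩)
          · exact ⟨⟨hvN, hc⟩, Nat.lt_succ_self _⟩
          · exact ⟨⟨h1, h2⟩, Nat.lt_succ_of_lt h3⟩
      rw [hAcard, hR, Finset.card_insert_of_notMem (by simp)]
      have := ih (le_of_lt hv)
      omega
    · -- new value at v
      have hnmemA : σ.getD v 0 ∉ (Finset.range v).image (fun i => σ.getD i 0) := by
        intro hmem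
        obtain ⟨j, hj, hje⟩ := Finset.mem_image.mp hmem
        rw [Finset.mem_range] at hj
        have : σ.idxOf (σ.getD v 0) ≤ j := by
          rw [← hje]; exact indexOf_le_of_getD (lt_trans hj hvN)
        omega
      have hAcard : ((Finset.range (v+1)).image (fun i => σ.getD i 0)).card
          = ((Finset.range v).image (fun i => σ.getD i 0)).card + 1 := by
        rw [hA, Finset.card_insert_of_notMem hnmemA]
      have hR : ((Finset.range σ.length).filter (fun s => σ.idxOf (σ.getD s 0) < s)).filter
            (fun x => x < v+1)
          = ((Finset.range σ.length).filter (fun s => σ.idxOf (σ.getD s 0) < s)).filter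
            (fun x => x < v) := by
        ext x
        simp only [Finset.mem_filter, Finset.mem_range]
        constructor
        · rintro ⟨⟨h1, h2⟩, h3⟩
          rcases Nat.lt_succ_iff_lt_or_eq.mp h3 with h | rfl
          · exact ⟨⟨h1, h2⟩, h⟩
          · exact absurd h2 hc
        · rintro ⟨⟨h1, h2⟩, h3⟩
          exact ⟨⟨h1, h2⟩, Nat.lt_succ_of_lt h3⟩
      rw [hAcard, hR]
      have := ih (le_of_lt hv)
      omega

end P4

section P5

theorem main_pad (σ : List ℕ) (hσ : IsInvSeq σ) (W : Finset ℕ) (hW : ∀ t ∈ W, t < σ.length) :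
    ∃ T : Finset ℕ, W ⊆ T ∧ (∀ t ∈ T, t < σ.length) ∧ T.card ≤ 4 * W.card ∧
      ∀ t ∈ T, ((T.image (fun i => σ.getD i 0)).filter (fun u => u < σ.getD t 0)).card
        ≤ (T.filter (fun x => x < t)).card := by
  classical
  set N := σ.length with hN
  set val : ℕ → ℕ := fun i => σ.getD i 0 with hvaldef
  set idx : ℕ → ℕ := fun v => σ.idxOf v with hidxdef
  set n := W.card with hn
  set repeats := (Finset.range N).filter (fun s => idx (val s) < s) with hrep
  set S := repeats.filter (fun s => (repeats.filter (fun x => x < s)).card < n) with hS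
  set Q := (W.image val).image idx with hQ
  set Pt := S.image (fun s => idx (val s)) with hPt
  set T := W ∪ Q ∪ S ∪ Pt with hT
  -- basic facts
  have hmem : ∀ {j : ℕ}, j < N → val j ∈ σ := fun hj => getD_mem_s15 hj
  have hidxlt : ∀ {v : ℕ}, v ∈ σ → idx v < N := fun hv => List.idxOf_lt_length_of_mem hv
  have hidxval : ∀ {v : ℕ}, v ∈ σ → val (idx v) = v := by
    intro v hv
    show σ.getD (σ.idxOf v) 0 = v
    rw [List.getD_eq_getElem _ _ (List.idxOf_lt_length_of_mem hv)]
    exact List.getElem_idxOf (List.idxOf_lt_length_of_mem hv)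
  have hidxle : ∀ {j : ℕ}, j < N → idx (val j) ≤ j := fun hj => indexOf_le_of_getD hj
  have hvle : ∀ {j : ℕ}, j < N → val j ≤ j := fun hj => hσ _ hj
  have hvidxge : ∀ {v : ℕ}, v ∈ σ → v ≤ idx v := by
    intro v hv
    conv_lhs => rw [← hidxval hv]
    exact hvle (hidxlt hv)
  -- membership bound for T
  have hTlt : ∀ t ∈ T, t < N := by
    intro t ht
    rw [hT] at ht
    simp only [Finset.mem_union] at ht
    rcases ht with ((ht | ht) | ht) | ht
    · exact hW t ht
    · obtain ⟨v, hv, rfl⟩ := Finset.mem_image.mp ht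
      obtain ⟨w, hw, rfl⟩ := Finset.mem_image.mp hv
      exact hidxlt (hmem (hW w hw))
    · exact Finset.mem_range.mp (Finset.mem_filter.mp (Finset.mem_filter.mp ht).1).1
    · obtain ⟨s, hs, rfl⟩ := Finset.mem_image.mp ht
      have hsN : s < N := Finset.mem_range.mp (Finset.mem_filter.mp (Finset.mem_filter.mp hs).1).1
      exact hidxlt (hmem hsN)
  have hWT : W ⊆ T := by
    intro w hw; rw [hT]
    simp only [Finset.mem_union]
    exact Or.inl (Or.inl (Or.inl hw))
  -- idx of any value of T is in T
  have hvalsT : ∀ v ∈ T.image val, idx v ∈ T := by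
    intro v hv
    obtain ⟨t, ht, rfl⟩ := Finset.mem_image.mp hv
    rw [hT] at ht
    simp only [Finset.mem_union] at ht
    rw [hT]
    simp only [Finset.mem_union]
    rcases ht with ((ht | ht) | ht) | ht
    · -- t ∈ W : idx (val t) ∈ Q
      refine Or.inl (Or.inl (Or.inr ?_))
      rw [hQ]
      exact Finset.mem_image.mpr ⟨val t, Finset.mem_image.mpr ⟨t, ht, rfl⟩, rfl⟩
    · -- t ∈ Q : t = idx w, val t = w, idx (val t) = t
      obtain ⟨w, hwv, rfl⟩ := Finset.mem_image.mp ht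
      obtain ⟨u, hu, rfl⟩ := Finset.mem_image.mp hwv
      have hmw : val u ∈ σ := hmem (hW u hu)
      rw [hidxval hmw]
      exact Or.inl (Or.inl (Or.inr ht))
    · -- t ∈ S : idx (val t) ∈ Pt
      refine Or.inr ?_
      rw [hPt]
      exact Finset.mem_image.mpr ⟨t, ht, rfl⟩
    · -- t ∈ Pt : t = idx (val s): val t = val s, idx (val t) = t
      obtain ⟨s, hs, rfl⟩ := Finset.mem_image.mp ht
      have hsN : s < N := Finset.mem_range.mp (Finset.mem_filter.mp (Finset.mem_filter.mp hs).1).1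
      have hms : val s ∈ σ := hmem hsN
      rw [hidxval hms]
      exact Or.inr (Finset.mem_image.mpr ⟨s, hs, rfl⟩)
  -- values of S entries have early first occurrence
  have hSrepeat : ∀ s ∈ S, idx (val s) < s :=
    fun s hs => (Finset.mem_filter.mp (Finset.mem_filter.mp hs).1).2
  -- every value of T is either a witness value or a value of an S entry
  have hvalsTcases : ∀ v ∈ T.image val, v ∈ W.image val ∨ ∃ s ∈ S, val s = v := by
    intro v hv
    obtain ⟨t, ht, rfl⟩ := Finset.mem_image.mp hv
    rw [hT] at ht
    simp only [Finset.mem_union] at ht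
    rcases ht with ((ht | ht) | ht) | ht
    · exact Or.inl (Finset.mem_image.mpr ⟨t, ht, rfl⟩)
    · obtain ⟨w, hwv, rfl⟩ := Finset.mem_image.mp ht
      obtain ⟨u, hu, rfl⟩ := Finset.mem_image.mp hwv
      rw [hidxval (hmem (hW u hu))]
      exact Or.inl (Finset.mem_image.mpr ⟨u, hu, rfl⟩)
    · exact Or.inr ⟨t, ht, rfl⟩
    · obtain ⟨s, hs, rfl⟩ := Finset.mem_image.mp ht
      have hsN : s < N := Finset.mem_range.mp (Finset.mem_filter.mp (Finset.mem_filter.mp hs).1).1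
      rw [hidxval (hmem hsN)]
      exact Or.inr ⟨s, hs, rfl⟩
  -- rank function on repeats is strictly monotone, S has card ≤ n
  have hrrkmono : ∀ s ∈ repeats, ∀ s' ∈ repeats, s < s' →
      (repeats.filter (fun x => x < s)).card < (repeats.filter (fun x => x < s')).card := by
    intro s hs s' _ hss
    apply Finset.card_lt_card
    constructor
    · intro x hx
      rw [Finset.mem_filter] at hx ⊢
      exact ⟨hx.1, lt_trans hx.2 hss⟩
    · intro hsub
      have := hsub (Finset.mem_filter.mpr ⟨hs, hss⟩)
      rw [Finset.mem_filter] at this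
      omega
  have hScard : S.card ≤ n := by
    have : ∀ s ∈ S, (repeats.filter (fun x => x < s)).card ∈ Finset.range n := by
      intro s hs
      exact Finset.mem_range.mpr (Finset.mem_filter.mp hs).2
    have hinj : ∀ s ∈ S, ∀ s' ∈ S, (repeats.filter (fun x => x < s)).card
        = (repeats.filter (fun x => x < s')).card → s = s' := by
      intro s hs s' hs' he
      by_contra hne
      rcases lt_or_gt_of_ne hne with h | h
      · exact absurd he (ne_of_lt (hrrkmono s (Finset.mem_filter.mp hs).1 s'
          (Finset.mem_filter.mp hs').1 h))
      · exact absurd he.symm (ne_of_lt (hrrkmono s' (Finset.mem_filter.mp hs').1 s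
          (Finset.mem_filter.mp hs).1 h))
    calc S.card ≤ (Finset.range n).card := Finset.card_le_card_of_injOn _ this hinj
    _ = n := Finset.card_range n
  -- total cardinality
  have hTcard : T.card ≤ 4 * W.card := by
    rw [hT]
    have h1 : (W ∪ Q ∪ S ∪ Pt).card ≤ W.card + Q.card + S.card + Pt.card := by
      calc (W ∪ Q ∪ S ∪ Pt).card ≤ (W ∪ Q ∪ S).card + Pt.card := Finset.card_union_le _ _
      _ ≤ (W ∪ Q).card + S.card + Pt.card := by
          have := Finset.card_union_le (W ∪ Q) S; omega
      _ ≤ W.card + Q.card + S.card + Pt.card := by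
          have := Finset.card_union_le W Q; omega
    have hQc : Q.card ≤ W.card := le_trans (Finset.card_image_le) (Finset.card_image_le)
    have hPtc : Pt.card ≤ S.card := Finset.card_image_le
    omega
  refine ⟨T, hWT, hTlt, hTcard, ?_⟩
  -- the main counting estimate
  intro t ht
  have htN : t < N := hTlt t ht
  set v := val t with hv
  have hvmem : v ∈ σ := hmem htN
  have hvT : v ∈ T.image val := Finset.mem_image.mpr ⟨t, ht, rfl⟩
  have hpt : idx v ≤ t := hidxle htN
  have hvp : v ≤ idx v := hvidxge hvmem
  have hvN : v < N := lt_of_le_of_lt hvp (lt_of_le_of_lt hpt htN)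
  -- it suffices to bound by entries before the first occurrence idx v
  have hmono : (T.filter (fun x => x < idx v)).card ≤ (T.filter (fun x => x < t)).card := by
    apply Finset.card_le_card
    intro x hx
    rw [Finset.mem_filter] at hx ⊢
    exact ⟨hx.1, lt_of_lt_of_le hx.2 hpt⟩
  refine le_trans ?_ hmono
  -- split values below v into good and bad
  set vals := T.image val with hvals
  set good := (vals.filter (fun u => u < v)).filter (fun u => idx u < idx v) with hgood
  set bad := (vals.filter (fun u => u < v)).filter (fun u => ¬ idx u < idx v) with hbad
  have hsplit : (vals.filter (fun u => u < v)).card = good.card + bad.card :=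
    (Finset.card_filter_add_card_filter_not (fun u => idx u < idx v)).symm
  -- bad values are strict: idx u > idx v
  have hbadgt : ∀ u ∈ bad, u < v ∧ idx v < idx u := by
    intro u hu
    rw [hbad, Finset.mem_filter, Finset.mem_filter] at hu
    obtain ⟨⟨huvals, hult⟩, hnot⟩ := hu
    rcases lt_trichotomy (idx u) (idx v) with h | h | h
    · exact absurd h hnot
    · exfalso
      have humem : u ∈ σ := by
        obtain ⟨x, hx, rfl⟩ := Finset.mem_image.mp huvals
        exact hmem (hTlt x hx)
      have : u = v := by
        rw [← hidxval humem, ← hidxval hvmem, h]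
      omega
    · exact ⟨hult, h⟩
  -- counting bad via missing values: |bad| ≤ r_v
  set rv := (repeats.filter (fun x => x < v)).card with hrv
  have hbadcard : bad.card ≤ rv := by
    have hsub : bad ⊆ Finset.range v \ ((Finset.range v).image val) := by
      intro u hu
      obtain ⟨hult, hgt⟩ := hbadgt u hu
      rw [Finset.mem_sdiff, Finset.mem_range]
      refine ⟨hult, ?_⟩
      intro hmemA
      obtain ⟨j, hj, hje⟩ := Finset.mem_image.mp hmemA
      rw [Finset.mem_range] at hj
      have hjN : j < N := lt_trans hj hvN
      have : idx u ≤ j := by rw [← hje]; exact hidxle hjN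
      omega
    have hAsub : (Finset.range v).image val ⊆ Finset.range v := by
      intro x hx
      obtain ⟨j, hj, rfl⟩ := Finset.mem_image.mp hx
      rw [Finset.mem_range] at hj ⊢
      exact lt_of_le_of_lt (hvle (lt_trans hj hvN)) hj
    have hcards := appear_card σ hσ v (le_of_lt hvN)
    calc bad.card ≤ (Finset.range v \ ((Finset.range v).image val)).card :=
        Finset.card_le_card hsub
    _ = v - ((Finset.range v).image val).card := by
        rw [Finset.card_sdiff_of_subset hAsub, Finset.card_range]
    _ = rv := by
        have hcards' : ((Finset.range v).image val).card + rv = v := hcards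
        omega
  -- |bad| ≤ |S ∩ [0, idx v)|
  have hbadS : bad.card ≤ (S.filter (fun x => x < idx v)).card := by
    rcases le_or_gt rv n with hcase | hcase
    · -- all repeats below v are in S
      have hsub : repeats.filter (fun x => x < v) ⊆ S.filter (fun x => x < idx v) := by
        intro s hs
        rw [Finset.mem_filter] at hs
        obtain ⟨hsrep, hsv⟩ := hs
        rw [Finset.mem_filter, hS, Finset.mem_filter]
        refine ⟨⟨hsrep, ?_⟩, lt_of_lt_of_le hsv hvp⟩
        calc (repeats.filter (fun x => x < s)).card
            < (repeats.filter (fun x => x < v)).card := by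
              apply Finset.card_lt_card
              constructor
              · intro x hx
                rw [Finset.mem_filter] at hx ⊢
                exact ⟨hx.1, lt_trans hx.2 hsv⟩
              · intro hsub'
                have := hsub' (Finset.mem_filter.mpr ⟨hsrep, hsv⟩)
                rw [Finset.mem_filter] at this
                omega
        _ ≤ n := hcase
      calc bad.card ≤ rv := hbadcard
      _ ≤ (S.filter (fun x => x < idx v)).card := Finset.card_le_card hsub
    · -- S is entirely below v, has card n, and bad values are witness values
      have hSsub : ∀ s ∈ S, s < v := by
        intro s hs
        rw [hS, Finset.mem_filter] at hs
        by_contra hge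
        push_neg at hge
        have : (repeats.filter (fun x => x < v)).card ≤ (repeats.filter (fun x => x < s)).card := by
          apply Finset.card_le_card
          intro x hx
          rw [Finset.mem_filter] at hx ⊢
          exact ⟨hx.1, lt_of_lt_of_le hx.2 hge⟩
        omega
      have hSfull : S.filter (fun x => x < idx v) = S := by
        apply Finset.filter_true_of_mem
        intro s hs
        exact lt_of_lt_of_le (hSsub s hs) hvp
      have hScardn : n ≤ S.card := by
        have hrepcard : n < repeats.card := by
          calc n < rv := hcase
          _ ≤ repeats.card := Finset.card_le_card (Finset.filter_subset _ _)
        have hex : ∀ m ∈ Finset.range n, ∃ s ∈ S, (repeats.filter (fun x => x < s)).card = m := by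
          intro m hm
          rw [Finset.mem_range] at hm
          obtain ⟨s, hsrep, hse⟩ := exists_filter_card_eq repeats (lt_trans hm hrepcard)
          refine ⟨s, ?_, hse⟩
          rw [hS, Finset.mem_filter]
          exact ⟨hsrep, by omega⟩
        have hex' : ∀ m : ℕ, ∃ s, m < n → s ∈ S ∧ (repeats.filter (fun x => x < s)).card = m := by
          intro m
          by_cases hm : m < n
          · obtain ⟨s, hs1, hs2⟩ := hex m (Finset.mem_range.mpr hm)
            exact ⟨s, fun _ => ⟨hs1, hs2⟩⟩
          · exact ⟨0, fun h => absurd h hm⟩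
        choose f hf using hex'
        have : (Finset.range n).card ≤ S.card := by
          apply Finset.card_le_card_of_injOn f
            (fun m hm => (hf m (Finset.mem_range.mp hm)).1)
          intro m1 h1 m2 h2 he
          have e1 := (hf m1 (Finset.mem_range.mp h1)).2
          have e2 := (hf m2 (Finset.mem_range.mp h2)).2
          rw [← e1, ← e2, he]
        simpa using this
      -- bad ⊆ witness values
      have hbadW : bad ⊆ W.image val := by
        intro u hu
        have huvals : u ∈ vals := by
          rw [hbad] at hu
          exact Finset.mem_of_mem_filter _ (Finset.mem_of_mem_filter _ hu)
        rcases hvalsTcases u huvals with h | ⟨s, hs, rfl⟩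
        · exact h
        · exfalso
          obtain ⟨hult, hgt⟩ := hbadgt _ hu
          have : idx (val s) < s := hSrepeat s hs
          have : s < v := hSsub s hs
          omega
      calc bad.card ≤ (W.image val).card := Finset.card_le_card hbadW
      _ ≤ n := Finset.card_image_le
      _ ≤ S.card := hScardn
      _ = (S.filter (fun x => x < idx v)).card := by rw [hSfull]
  -- good values inject via idx into T before idx v, disjointly from S-entries
  have hmemvals : ∀ u ∈ vals, u ∈ σ := by
    intro u hu
    obtain ⟨x, hx, rfl⟩ := Finset.mem_image.mp hu
    exact hmem (hTlt x hx)
  have hgoodinj : (good.image idx).card = good.card := by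
    apply Finset.card_image_of_injOn
    intro u1 h1 u2 h2 he
    have h1' : u1 ∈ good := h1
    have h2' : u2 ∈ good := h2
    have hm1 : u1 ∈ σ := hmemvals u1 (Finset.mem_of_mem_filter _ (Finset.mem_of_mem_filter _ h1'))
    have hm2 : u2 ∈ σ := hmemvals u2 (Finset.mem_of_mem_filter _ (Finset.mem_of_mem_filter _ h2'))
    rw [← hidxval hm1, ← hidxval hm2, he]
  have hunion : (good.image idx) ∪ (S.filter (fun x => x < idx v)) ⊆ T.filter (fun x => x < idx v) := by
    intro x hx
    rw [Finset.mem_union] at hx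
    rw [Finset.mem_filter]
    rcases hx with hx | hx
    · obtain ⟨u, hu, rfl⟩ := Finset.mem_image.mp hx
      have huvals : u ∈ vals := by
        rw [hgood] at hu
        exact Finset.mem_of_mem_filter _ (Finset.mem_of_mem_filter _ hu)
      refine ⟨hvalsT u huvals, ?_⟩
      rw [hgood, Finset.mem_filter] at hu
      exact hu.2
    · rw [Finset.mem_filter] at hx
      refine ⟨?_, hx.2⟩
      rw [hT]
      simp only [Finset.mem_union]
      exact Or.inl (Or.inr hx.1)
  have hdisj : Disjoint (good.image idx) (S.filter (fun x => x < idx v)) := by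
    rw [Finset.disjoint_left]
    intro x hx hx'
    obtain ⟨u, hu, rfl⟩ := Finset.mem_image.mp hx
    have huvals : u ∈ vals := by
      rw [hgood] at hu
      exact Finset.mem_of_mem_filter _ (Finset.mem_of_mem_filter _ hu)
    have humem : u ∈ σ := by
      obtain ⟨x, hx2, rfl⟩ := Finset.mem_image.mp huvals
      exact hmem (hTlt x hx2)
    have hs : idx u ∈ S := Finset.mem_of_mem_filter _ hx'
    have := hSrepeat _ hs
    rw [hidxval humem] at this
    omega
  show (vals.filter (fun u => u < v)).card ≤ (T.filter (fun x => x < idx v)).card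
  calc (vals.filter (fun u => u < v)).card = good.card + bad.card := hsplit
  _ ≤ (good.image idx).card + (S.filter (fun x => x < idx v)).card := by
      rw [hgoodinj]; omega
  _ = ((good.image idx) ∪ (S.filter (fun x => x < idx v))).card :=
      (Finset.card_union_of_disjoint hdisj).symm
  _ ≤ (T.filter (fun x => x < idx v)).card := Finset.card_le_card hunion

end P5

section P6

lemma getD_map {f : ℕ → ℕ} {L : List ℕ} {i : ℕ} (hi : i < L.length) :
    (L.map f).getD i 0 = f (L.getD i 0) := by
  rw [List.getD_eq_getElem _ _ (by simpa using hi), List.getD_eq_getElem _ _ hi]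
  simp

lemma toFinset_sub (σ : List ℕ) (T : Finset ℕ) :
    (sub σ T).toFinset = T.image (fun i => σ.getD i 0) := by
  ext x
  simp only [sub, List.mem_toFinset, List.mem_map, Finset.mem_image]
  constructor
  · rintro ⟨a, ha, rfl⟩
    exact ⟨a, (Finset.mem_sort (α := ℕ) (·≤·)).mp ha, rfl⟩
  · rintro ⟨a, ha, rfl⟩
    exact ⟨a, (Finset.mem_sort (α := ℕ) (·≤·)).mpr ha, rfl⟩

theorem key {σ ρ : List ℕ} (hσ : IsInvSeq σ) (h : ContainsPat σ ρ) :
    ∃ q : List ℕ, IsInvSeq q ∧ IsCayley q ∧ q.length ≤ 4 * ρ.length ∧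
      ContainsPat q ρ ∧ ContainsPat σ q := by
  classical
  obtain ⟨τ, hsub, hiso⟩ := h
  obtain ⟨is, heq, hp⟩ := List.sublist_eq_map_getElem hsub
  set L : List ℕ := is.map Fin.val with hL
  have hLsorted : L.Pairwise (· < ·) := by
    rw [hL, List.pairwise_map]
    exact hp.imp (fun h => h)
  have hLnodup : L.Nodup := hLsorted.imp (fun h => Nat.ne_of_lt h)
  set W : Finset ℕ := L.toFinset with hWdef
  have hW : ∀ t ∈ W, t < σ.length := by
    intro t ht
    rw [hWdef, List.mem_toFinset, hL, List.mem_map] at ht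
    obtain ⟨j, _, rfl⟩ := ht
    exact j.isLt
  have hWsort : W.sort (·≤·) = L := by
    apply (fun hp h1 h2 => List.Perm.eq_of_pairwise' (r := (·≤·:ℕ→ℕ→Prop)) h1 h2 hp)
    · apply List.perm_of_nodup_nodup_toFinset_eq (Finset.sort_nodup _ _) hLnodup
      rw [hWdef, Finset.sort_toFinset]
    · exact Finset.pairwise_sort _ _
    · exact hLsorted.imp (fun h => le_of_lt h)
  have hWcard : W.card = ρ.length := by
    rw [hWdef, List.toFinset_card_of_nodup hLnodup, hL]
    simp only [List.length_map]
    have : τ.length = is.length := by rw [heq]; simp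
    rw [← this, ← hiso.1]
  have hsubW : sub σ W = τ := by
    rw [sub, hWsort, hL, List.map_map, heq]
    apply List.map_congr_left
    intro x _
    show σ.getD x.val 0 = σ.get x
    rw [List.getD_eq_getElem _ _ x.isLt]
    rfl
  obtain ⟨T, hWT, hTlt, hTcard, hmain⟩ := main_pad σ hσ W hW
  set τ' := sub σ T with hτ'
  set q := red τ' with hq
  have hτ'sub : τ'.Sublist σ := sub_sublist hTlt
  have hWTsub : (sub σ W).Sublist τ' := sub_mono hWT
  have hlenτ' : τ'.length = T.card := length_sub σ T
  refine ⟨q, ?_, red_cayley τ', ?_, ?_, ⟨τ', hτ'sub, ordIso_red τ'⟩⟩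
  · -- q is an inversion sequence
    intro i hi
    have hiq : i < τ'.length := by rwa [hq, length_red] at hi
    have hiT : i < T.card := by rwa [hlenτ'] at hiq
    rw [hq, red_getD_s15 hiq]
    have hτ'getD : τ'.getD i 0 = σ.getD ((T.sort (·≤·)).getD i 0) 0 := by
      rw [hτ', sub]
      exact getD_map (by rw [Finset.length_sort]; exact hiT)
    set t := (T.sort (·≤·)).getD i 0 with ht
    have htT : t ∈ T := by
      rw [ht, ← Finset.mem_sort (α := ℕ) (·≤·)]
      apply getD_mem_s15
      rw [Finset.length_sort]; exact hiT
    have hrk : rk τ' (τ'.getD i 0) = ((T.image (fun i => σ.getD i 0)).filter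
        (fun u => u < σ.getD t 0)).card := by
      rw [hτ'getD, rk, toFinset_sub]
    rw [hrk]
    calc ((T.image (fun i => σ.getD i 0)).filter (fun u => u < σ.getD t 0)).card
        ≤ (T.filter (fun x => x < t)).card := hmain t htT
    _ = i := sort_filter_card T hiT
  · -- length bound
    rw [hq, length_red, hlenτ', ← hWcard]
    exact hTcard
  · -- q contains ρ
    refine ⟨(sub σ W).map (rk τ'), ?_, ?_⟩
    · rw [hq, red_eq_map]
      exact hWTsub.map (rk τ')
    · have hlen1 : (sub σ W).length = ρ.length := by
        rw [hsubW, ← hiso.1]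
      refine ⟨by simp [hlen1], ?_⟩
      intro i j hi hj
      have hi1 : i < (sub σ W).length := by omega
      have hj1 : j < (sub σ W).length := by omega
      rw [getD_map hi1, getD_map hj1]
      have hiso2 := hiso.2 i j (by omega) (by omega)
      rw [hsubW] at hi1 hj1 ⊢
      rw [hiso2]
      have hmemj : τ.getD j 0 ∈ τ' := hWTsub.subset (by rw [← hsubW] at *; exact getD_mem_s15 hj1)
      exact (rk_le_iff τ' hmemj).symm
end P6

section P7

def allLists : ℕ → ℕ → Finset (List ℕ)
  | 0, _ => {[]}
  | (n+1), m => allLists n m ∪ ((Finset.range m) ×ˢ allLists n m).image (fun p => p.1 :: p.2)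

lemma mem_allLists : ∀ (n m : ℕ) (l : List ℕ),
    l ∈ allLists n m ↔ l.length ≤ n ∧ ∀ x ∈ l, x < m := by
  intro n
  induction n with
  | zero =>
    intro m l
    simp only [allLists, Finset.mem_singleton]
    constructor
    · rintro rfl; simp
    · rintro ⟨h1, _⟩
      exact List.eq_nil_of_length_eq_zero (Nat.le_zero.mp h1)
  | succ n ih =>
    intro m l
    simp only [allLists, Finset.mem_union, Finset.mem_image, Finset.mem_product,
      Finset.mem_range]
    constructor
    · rintro (h | ⟨⟨a, t⟩, ⟨ham, htm⟩, rfl⟩)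
      · obtain ⟨h1, h2⟩ := (ih m l).mp h
        exact ⟨Nat.le_succ_of_le h1, h2⟩
      · obtain ⟨h1, h2⟩ := (ih m t).mp htm
        refine ⟨by simpa using Nat.succ_le_succ h1, ?_⟩
        intro x hx
        rcases List.mem_cons.mp hx with rfl | hx
        · exact ham
        · exact h2 x hx
    · rintro ⟨h1, h2⟩
      cases l with
      | nil => exact Or.inl ((ih m []).mpr (by simp))
      | cons a t =>
        refine Or.inr ⟨⟨a, t⟩, ⟨h2 a (by simp), (ih m t).mpr ⟨by simpa using h1, ?_⟩⟩, rfl⟩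
        intro x hx
        exact h2 x (List.mem_cons_of_mem a hx)

theorem stmt15 (P : Finset (List ℕ)) (hP : ∀ ρ ∈ P, ρ ≠ [] ∧ IsCayley ρ) :
    ∃ Q : Finset (List ℕ), (∀ q ∈ Q, IsInvSeq q ∧ IsCayley q) ∧
      ∀ σ : List ℕ, IsInvSeq σ →
        ((∀ ρ ∈ P, ¬ ContainsPat σ ρ) ↔ (∀ q ∈ Q, ¬ ContainsPat σ q)) := by
  classical
  refine ⟨P.biUnion (fun ρ => (allLists (4 * ρ.length) (4 * ρ.length)).filter
    (fun q => IsInvSeq q ∧ IsCayley q ∧ ContainsPat q ρ)), ?_, ?_⟩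
  · intro q hq
    obtain ⟨ρ, _, hq⟩ := Finset.mem_biUnion.mp hq
    obtain ⟨_, h1, h2, _⟩ := Finset.mem_filter.mp hq
    exact ⟨h1, h2⟩
  · intro σ hσ
    constructor
    · intro havoid q hq hcon
      obtain ⟨ρ, hρP, hq⟩ := Finset.mem_biUnion.mp hq
      obtain ⟨_, _, _, hqρ⟩ := Finset.mem_filter.mp hq
      exact havoid ρ hρP (containsPat_trans hcon hqρ)
    · intro havoid ρ hρP hcon
      obtain ⟨q, hq1, hq2, hq3, hq4, hq5⟩ := key hσ hcon
      refine havoid q ?_ hq5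
      apply Finset.mem_biUnion.mpr
      refine ⟨ρ, hρP, Finset.mem_filter.mpr ⟨?_, hq1, hq2, hq4⟩⟩
      rw [mem_allLists]
      refine ⟨hq3, ?_⟩
      intro x hx
      obtain ⟨i, hi, rfl⟩ := List.getElem_of_mem hx
      have h := hq1 i hi
      rw [List.getD_eq_getElem _ _ hi] at h
      omega

end P7
end
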